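/- Let N : ℝ → ℝ be analytic near 0 with N(0) = 0, N(x) = Σ_{i ≥ 1} c_i x^i. Let μ be a finite nonnegative measure on [0, ∞) and set M = μ([0, ∞)). Then Σ_{i ≥ 1} c_i M^i = ∫₀^∞ N'(μ([0, r])) dμ(r), provided μ has no atoms (μ({r}) = 0 for every r). -/

import Mathlib

open MeasureTheory

open Set in
private lemma stmt8_map_eq (μ : Measure ℝ) [IsFiniteMeasure μ]
    (hsupp : μ (Set.Iio 0) = 0)
    (hatom : ∀ r : ℝ, μ {r} = 0)
    (M : ℝ) (hM : M = (μ Set.univ).toReal) :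
    μ.map (fun r => (μ (Set.Iic r)).toReal) = volume.restrict (Set.Ioc 0 M) := by
  set F : ℝ → ℝ := fun r => (μ (Set.Iic r)).toReal with hF
  have hne : ∀ s : Set ℝ, μ s ≠ ⊤ := fun s => measure_ne_top μ s
  have hofF : ∀ r, μ (Iic r) = ENNReal.ofReal (F r) := fun r =>
    (ENNReal.ofReal_toReal (hne _)).symm
  have hFmono : Monotone F := fun a b hab =>
    ENNReal.toReal_mono (hne _) (measure_mono (Iic_subset_Iic.2 hab))
  have hFmeas : Measurable F := hFmono.measurable
  have hF0 : ∀ r, 0 ≤ F r := fun r => ENNReal.toReal_nonneg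
  have hFle : ∀ r, F r ≤ M := fun r => by
    rw [hM]; exact ENNReal.toReal_mono (hne _) (measure_mono (subset_univ _))
  have hM0 : 0 ≤ M := hM ▸ ENNReal.toReal_nonneg
  have huniv : μ Set.univ = ENNReal.ofReal M := by
    rw [hM, ENNReal.ofReal_toReal (hne _)]
  refine MeasureTheory.Measure.ext_of_Iic _ _ (fun t => ?_)
  rw [Measure.map_apply hFmeas measurableSet_Iic,
    Measure.restrict_apply measurableSet_Iic, Set.inter_comm, Set.Ioc_inter_Iic,
    Real.volume_Ioc]
  have hpre : F ⁻¹' Iic t = {r : ℝ | F r ≤ t} := rfl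
  rcases lt_or_ge t 0 with ht | ht
  · have : F ⁻¹' Iic t = ∅ := by
      ext r; simp only [mem_preimage, mem_Iic, mem_empty_iff_false, iff_false, not_le]
      exact lt_of_lt_of_le ht (hF0 r)
    rw [this, measure_empty, min_eq_right (ht.le.trans hM0), sub_zero]
    symm
    rw [ENNReal.ofReal_eq_zero]
    exact ht.le
  rcases le_or_gt M t with htM | htM
  · have : F ⁻¹' Iic t = Set.univ := by
      ext r; simp only [mem_preimage, mem_Iic, mem_univ, iff_true]
      exact le_trans (hFle r) htM
    rw [this, huniv, min_eq_left htM, sub_zero]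
  -- main case 0 ≤ t < M
  rw [min_eq_right htM.le, sub_zero]
  set S : Set ℝ := {r : ℝ | F r ≤ t} with hS
  have hSne : S.Nonempty := by
    refine ⟨-1, ?_⟩
    have hsub : Iic (-1 : ℝ) ⊆ Iio 0 := fun x hx => lt_of_le_of_lt hx (by norm_num : (-1:ℝ) < 0)
    have : μ (Iic (-1 : ℝ)) = 0 :=
      le_antisymm (le_trans (measure_mono hsub) hsupp.le) zero_le
    simp only [hS, mem_setOf_eq, hF, this]
    simpa using ht
  have hSbdd : BddAbove S := by
    have hmono : Monotone (fun n : ℕ => Iic (n : ℝ)) := fun a b hab =>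
      Iic_subset_Iic.2 (by exact_mod_cast hab)
    have hU : (⋃ n : ℕ, Iic (n : ℝ)) = Set.univ := by
      ext x; simp only [mem_iUnion, mem_Iic, mem_univ, iff_true]
      obtain ⟨n, hn⟩ := exists_nat_ge x
      exact ⟨n, hn⟩
    have := hmono.measure_iUnion (μ := μ)
    rw [hU, huniv] at this
    have hlt : ENNReal.ofReal t < ⨆ n : ℕ, μ (Iic (n : ℝ)) := by
      rw [← this]; exact ENNReal.ofReal_lt_ofReal_iff (lt_of_le_of_lt ht htM) |>.2 htM
    obtain ⟨n, hn⟩ := lt_iSup_iff.1 hlt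
    refine ⟨n, fun r hr => ?_⟩
    by_contra hrn
    push_neg at hrn
    have : μ (Iic (n : ℝ)) ≤ μ (Iic r) := measure_mono (Iic_subset_Iic.2 hrn.le)
    have : ENNReal.ofReal t < μ (Iic r) := lt_of_lt_of_le hn this
    rw [hofF r] at this
    exact absurd hr (not_le.2 ((ENNReal.ofReal_lt_ofReal_iff_of_nonneg ht).1 this))
  set s := sSup S with hs
  have hmem_le : ∀ r ∈ S, μ (Iic r) ≤ ENNReal.ofReal t := fun r hr => by
    rw [hofF r]; exact ENNReal.ofReal_le_ofReal hr
  have hFs_le : F s ≤ t := by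
    have hIio : μ (Iio s) ≤ ENNReal.ofReal t := by
      have hmono : Monotone (fun n : ℕ => Iic (s - 1 / (n + 1))) := fun a b hab =>
        Iic_subset_Iic.2 (by
          have hab' : (a : ℝ) ≤ b := Nat.cast_le.2 hab
          have : (1 : ℝ) / (b + 1) ≤ 1 / (a + 1) := by
            apply one_div_le_one_div_of_le
            · positivity
            · linarith
          linarith)
      have hU : (⋃ n : ℕ, Iic (s - 1 / (n + 1))) = Iio s := by
        ext x
        simp only [mem_iUnion, mem_Iic, mem_Iio]
        constructor
        · rintro ⟨n, hn⟩
          have : (0 : ℝ) < 1 / (n + 1) := by positivity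
          linarith
        · intro hx
          obtain ⟨n, hn⟩ := exists_nat_one_div_lt (sub_pos.2 hx)
          exact ⟨n, by linarith⟩
      rw [← hU, hmono.measure_iUnion]
      refine iSup_le (fun n => ?_)
      have h1 : (0 : ℝ) < 1 / ((n : ℝ) + 1) := by positivity
      obtain ⟨r, hrS, hrlt⟩ := exists_lt_of_lt_csSup hSne (by linarith : s - 1 / ((n : ℝ) + 1) < s)
      exact le_trans (measure_mono (Iic_subset_Iic.2 hrlt.le)) (hmem_le r hrS)
    have : μ (Iic s) ≤ ENNReal.ofReal t := by
      have hsplit : μ (Iic s) ≤ μ (Iio s) + μ {s} := by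
        rw [← measure_union (by simp) (measurableSet_singleton s)]
        exact measure_mono (fun x hx => by
          rcases lt_or_eq_of_le (mem_Iic.1 hx) with h | h
          · exact Or.inl h
          · exact Or.inr h)
      rw [hatom s, add_zero] at hsplit
      exact le_trans hsplit hIio
    calc F s ≤ (ENNReal.ofReal t).toReal := ENNReal.toReal_mono ENNReal.ofReal_ne_top this
    _ = t := ENNReal.toReal_ofReal ht
  have hFs_ge : t ≤ F s := by
    by_contra hlt
    push_neg at hlt
    have hanti : Antitone (fun n : ℕ => Iic (s + 1 / (n + 1))) := fun a b hab =>
      Iic_subset_Iic.2 (by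
        have hab' : (a : ℝ) ≤ b := Nat.cast_le.2 hab
        have : (1 : ℝ) / (b + 1) ≤ 1 / (a + 1) := by
          apply one_div_le_one_div_of_le
          · positivity
          · linarith
        linarith)
    have hI : (⋂ n : ℕ, Iic (s + 1 / (n + 1))) = Iic s := by
      ext x
      simp only [mem_iInter, mem_Iic]
      constructor
      · intro h
        by_contra hx
        push_neg at hx
        obtain ⟨n, hn⟩ := exists_nat_one_div_lt (sub_pos.2 hx)
        have := h n
        linarith
      · intro hx n
        have : (0 : ℝ) < 1 / ((n : ℝ) + 1) := by positivity
        linarith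
    have hinf := hanti.measure_iInter (μ := μ)
      (fun n => measurableSet_Iic.nullMeasurableSet) ⟨0, hne _⟩
    rw [hI] at hinf
    have hlt' : μ (Iic s) < ENNReal.ofReal t := by
      rw [hofF s]
      exact (ENNReal.ofReal_lt_ofReal_iff (lt_of_le_of_lt (hF0 s) hlt)).2 hlt
    rw [hinf] at hlt'
    obtain ⟨n, hn⟩ := iInf_lt_iff.1 hlt'
    have hmemS : s + 1 / ((n : ℝ) + 1) ∈ S := by
      have : F (s + 1 / ((n : ℝ) + 1)) < (ENNReal.ofReal t).toReal :=
        ENNReal.toReal_strict_mono ENNReal.ofReal_ne_top hn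
      rw [ENNReal.toReal_ofReal ht] at this
      exact le_of_lt this
    have := le_csSup hSbdd hmemS
    have h1 : (0 : ℝ) < 1 / ((n : ℝ) + 1) := by positivity
    linarith
  have hFs : F s = t := le_antisymm hFs_le hFs_ge
  have hSeq : F ⁻¹' Iic t = Iic s := by
    ext r
    simp only [mem_preimage, mem_Iic]
    constructor
    · intro hr; exact le_csSup hSbdd hr
    · intro hr; exact le_trans (hFmono hr) (le_of_eq hFs)
  rw [hSeq, hofF s, hFs]

private lemma stmt8_moment (μ : Measure ℝ) [IsFiniteMeasure μ]
    (hsupp : μ (Set.Iio 0) = 0)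
    (hatom : ∀ r : ℝ, μ {r} = 0)
    (M : ℝ) (hM : M = (μ Set.univ).toReal) (k : ℕ) :
    ∫ r, ((μ (Set.Iic r)).toReal) ^ k ∂μ = M ^ (k + 1) / (k + 1) := by
  have hM0 : 0 ≤ M := hM ▸ ENNReal.toReal_nonneg
  set F : ℝ → ℝ := fun r => (μ (Set.Iic r)).toReal with hF
  have hFmono : Monotone F := fun a b hab =>
    ENNReal.toReal_mono (measure_ne_top μ _) (measure_mono (Set.Iic_subset_Iic.2 hab))
  have hFmeas : Measurable F := hFmono.measurable
  have hmap := stmt8_map_eq μ hsupp hatom M hM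
  have : ∫ r, F r ^ k ∂μ = ∫ x, x ^ k ∂(μ.map F) := by
    rw [integral_map hFmeas.aemeasurable]
    exact (measurable_id.pow_const k).aestronglyMeasurable
  rw [this, hmap, ← intervalIntegral.integral_of_le hM0, integral_pow]
  simp

/-- Symmetrization identity: for `N(x) = Σ_{i≥1} c_i x^i` analytic (with convergent
series and derivative series at `M`), and `μ` a finite atomless nonnegative measure
supported on `[0,∞)` with total mass `M`, one has
`Σ_{i≥1} c_i M^i = ∫₀^∞ N'(μ([0,r])) dμ(r)`, where `N'(x) = Σ_{i≥1} i c_i x^{i-1}`. -/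
theorem stmt8 (μ : Measure ℝ) [IsFiniteMeasure μ]
    (hsupp : μ (Set.Iio 0) = 0)
    (hatom : ∀ r : ℝ, μ {r} = 0)
    (c : ℕ → ℝ) (hc0 : c 0 = 0)
    (M : ℝ) (hM : M = (μ Set.univ).toReal)
    (hconv : Summable fun i : ℕ => |c i| * M ^ i)
    (hconv' : Summable fun i : ℕ => (i : ℝ) * |c i| * M ^ (i - 1)) :
    ∑' i : ℕ, c i * M ^ i
      = ∫ r, (∑' i : ℕ, (i : ℝ) * c i * ((μ (Set.Icc 0 r)).toReal) ^ (i - 1)) ∂μ := by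
  have hIcc : ∀ r : ℝ, μ (Set.Icc 0 r) = μ (Set.Iic r) := by
    intro r
    refine le_antisymm (measure_mono Set.Icc_subset_Iic_self) ?_
    calc μ (Set.Iic r) ≤ μ (Set.Iio 0 ∪ Set.Icc 0 r) := measure_mono (fun x hx => by
          rcases lt_or_ge x 0 with h | h
          · exact Or.inl h
          · exact Or.inr ⟨h, hx⟩)
      _ ≤ μ (Set.Iio 0) + μ (Set.Icc 0 r) := measure_union_le _ _
      _ = μ (Set.Icc 0 r) := by rw [hsupp, zero_add]
  simp only [hIcc]
  set F : ℝ → ℝ := fun r => (μ (Set.Iic r)).toReal with hF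
  have hFmono : Monotone F := fun a b hab =>
    ENNReal.toReal_mono (measure_ne_top μ _) (measure_mono (Set.Iic_subset_Iic.2 hab))
  have hFmeas : Measurable F := hFmono.measurable
  have hF0 : ∀ r, 0 ≤ F r := fun r => ENNReal.toReal_nonneg
  have hFle : ∀ r, F r ≤ M := fun r => by
    rw [hM]; exact ENNReal.toReal_mono (measure_ne_top μ _) (measure_mono (Set.subset_univ _))
  have hM0 : 0 ≤ M := hM ▸ ENNReal.toReal_nonneg
  set f : ℕ → ℝ → ℝ := fun i r => (i : ℝ) * c i * F r ^ (i - 1) with hf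
  have hmeasf : ∀ i : ℕ, AEStronglyMeasurable (f i) μ := fun i =>
    ((hFmeas.pow_const _).const_mul _).aestronglyMeasurable
  have hbound : ∀ i r, ‖f i r‖ ≤ (i : ℝ) * |c i| * M ^ (i - 1) := by
    intro i r
    have h1 : ‖f i r‖ = (i : ℝ) * |c i| * F r ^ (i - 1) := by
      rw [hf]
      simp only [Real.norm_eq_abs, abs_mul, Nat.abs_cast,
        abs_pow, abs_of_nonneg (hF0 r)]
    rw [h1]
    have : F r ^ (i - 1) ≤ M ^ (i - 1) := pow_le_pow_left₀ (hF0 r) (hFle r) _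
    have hci : 0 ≤ (i : ℝ) * |c i| := by positivity
    exact mul_le_mul_of_nonneg_left this hci
  have hb0 : ∀ i : ℕ, 0 ≤ (i : ℝ) * |c i| * M ^ (i - 1) := fun i => by positivity
  have hlint : (∑' i : ℕ, ∫⁻ r, ‖f i r‖₊ ∂μ) ≠ ⊤ := by
    have hle : ∀ i : ℕ, ∫⁻ r, ‖f i r‖₊ ∂μ
        ≤ ENNReal.ofReal ((i : ℝ) * |c i| * M ^ (i - 1)) * μ Set.univ := by
      intro i
      calc ∫⁻ r, (‖f i r‖₊ : ENNReal) ∂μ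
          ≤ ∫⁻ _, ENNReal.ofReal ((i : ℝ) * |c i| * M ^ (i - 1)) ∂μ := by
            refine lintegral_mono fun r => ?_
            rw [show ((‖f i r‖₊ : ENNReal)) = ENNReal.ofReal ‖f i r‖ from (ofReal_norm _).symm]
            exact ENNReal.ofReal_le_ofReal (hbound i r)
        _ = ENNReal.ofReal ((i : ℝ) * |c i| * M ^ (i - 1)) * μ Set.univ := by
            rw [lintegral_const]
    refine ne_top_of_le_ne_top ?_ (ENNReal.tsum_le_tsum hle)
    rw [ENNReal.tsum_mul_right, ← ENNReal.ofReal_tsum_of_nonneg hb0 hconv']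
    exact ENNReal.mul_ne_top ENNReal.ofReal_ne_top (measure_ne_top μ _)
  rw [integral_tsum hmeasf hlint]
  refine tsum_congr fun i => ?_
  cases i with
  | zero => simp [hf, hc0]
  | succ n =>
    have : ∫ r, f (n + 1) r ∂μ = ((n : ℝ) + 1) * c (n + 1) * (M ^ (n + 1) / ((n : ℝ) + 1)) := by
      rw [hf]
      simp only [Nat.add_sub_cancel, Nat.cast_add, Nat.cast_one]
      rw [integral_const_mul, stmt8_moment μ hsupp hatom M hM n]
    rw [this]
    have hn : ((n : ℝ) + 1) ≠ 0 := by positivity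
    field_simp
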